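/- arXiv:2203.11189 — 3 statements merged into one kernel-verified Lean document; each statement's English description precedes it below -/
import Mathlib

section
/- Let σ : [0,h] → ℝ^m be the polynomial (of degree s in the scaled variable) satisfying σ̇(ch) = Σ_{j=0}^{s−1} P_j(c) γ_j(σ) for c ∈ [0,1] with σ(0) = y_0, where γ_j(σ) = ∫₀¹ P_j(τ) f(σ(τh)) dτ. Suppose f(y) = J∇H(y) with J a constant skew-symmetric m×m matrix (Jᵀ = −J) and H : ℝ^m → ℝ continuously differentiable. Then H(σ(h)) = H(σ(0)), i.e., the method conserves the Hamiltonian H. -/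
open Polynomial intervalIntegral Matrix
open scoped RealInnerProductSpace

lemma skew_dot {m : ℕ} (J : Matrix (Fin m) (Fin m) ℝ) (hJ : Jᵀ = -J)
    (x : Fin m → ℝ) : x ⬝ᵥ J.mulVec x = 0 := by
  have h1 : x ⬝ᵥ J.mulVec x = (x ᵥ* J) ⬝ᵥ x := Matrix.dotProduct_mulVec x J x
  have h2 : x ᵥ* J = Jᵀ.mulVec x := (Matrix.mulVec_transpose J x).symm
  rw [h2, hJ] at h1
  have h3 : ((-J).mulVec x) ⬝ᵥ x = -(J.mulVec x ⬝ᵥ x) := by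
    simp [Matrix.neg_mulVec]
  rw [h3, dotProduct_comm x] at h1
  have h4 : J *ᵥ x ⬝ᵥ x = 0 := by linarith
  rw [dotProduct_comm, h4]

lemma grad_inner {m : ℕ} (H : EuclideanSpace ℝ (Fin m) → ℝ)
    (x v : EuclideanSpace ℝ (Fin m)) :
    ⟪gradient H x, v⟫ = fderiv ℝ H x v := by
  rw [gradient, InnerProductSpace.toDual_symm_apply]

lemma inner_J_self {m : ℕ} (J : Matrix (Fin m) (Fin m) ℝ) (hJ : Jᵀ = -J)
   (v : EuclideanSpace ℝ (Fin m)) :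
   ⟪v, (EuclideanSpace.equiv (Fin m) ℝ).symm
      (J.mulVec ((EuclideanSpace.equiv (Fin m) ℝ) v))⟫ = 0 := by
  have : ⟪v, (EuclideanSpace.equiv (Fin m) ℝ).symm
      (J.mulVec ((EuclideanSpace.equiv (Fin m) ℝ) v))⟫
      = ((EuclideanSpace.equiv (Fin m) ℝ) v) ⬝ᵥ J.mulVec ((EuclideanSpace.equiv (Fin m) ℝ) v) := by
    simp [PiLp.inner_apply, dotProduct, RCLike.inner_apply]
    exact Finset.sum_congr rfl fun i _ => mul_comm _ _
  rw [this, skew_dot J hJ]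


/-- Energy conservation of the continuous-stage method HBVM(∞,s): if
`f = J ∇H` with `J` skew-symmetric, and `σ` is the polynomial approximation
whose scaled derivative is the truncated Legendre expansion of `f ∘ σ`,
then `H(σ(h)) = H(σ(0))`. -/
theorem hbvm_energy_conservation
    {m s : ℕ}
    (P : ℕ → Polynomial ℝ)
    (hdeg : ∀ j, (P j).natDegree = j)
    (hlead : ∀ j, 0 < (P j).leadingCoeff)
    (horth : ∀ i j, ∫ x in (0:ℝ)..1, (P i).eval x * (P j).eval x
              = if i = j then 1 else 0)
    (h : ℝ) (hh : 0 < h)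
    (H : EuclideanSpace ℝ (Fin m) → ℝ) (hH : ContDiff ℝ 1 H)
    (J : Matrix (Fin m) (Fin m) ℝ) (hJ : Jᵀ = -J)
    (f : EuclideanSpace ℝ (Fin m) → EuclideanSpace ℝ (Fin m))
    (hf : ∀ y, f y = (EuclideanSpace.equiv (Fin m) ℝ).symm
      (J.mulVec ((EuclideanSpace.equiv (Fin m) ℝ) (gradient H y))))
    (y₀ : EuclideanSpace ℝ (Fin m))
    (σ : ℝ → EuclideanSpace ℝ (Fin m))
    (hσ0 : σ 0 = y₀)
    (γ : ℕ → EuclideanSpace ℝ (Fin m))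
    (hγ : ∀ j, γ j = ∫ τ in (0:ℝ)..1, (P j).eval τ • f (σ (τ * h)))
    (hσ : ∀ c ∈ Set.Icc (0:ℝ) 1,
      HasDerivAt σ (∑ j : Fin s, (P (j : ℕ)).eval c • γ (j : ℕ)) (c * h)) :
    H (σ h) = H (σ 0) := by
  classical
  -- the continuous linear map v ↦ J v
  set L : EuclideanSpace ℝ (Fin m) →L[ℝ] EuclideanSpace ℝ (Fin m) :=
    ((EuclideanSpace.equiv (Fin m) ℝ).symm.toContinuousLinearMap).comp
      ((LinearMap.toContinuousLinearMap J.mulVecLin).comp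
        (EuclideanSpace.equiv (Fin m) ℝ).toContinuousLinearMap) with hLdef
  have hLapp : ∀ v : EuclideanSpace ℝ (Fin m), L v = (EuclideanSpace.equiv (Fin m) ℝ).symm
      (J.mulVec ((EuclideanSpace.equiv (Fin m) ℝ) v)) := by
    intro v; rfl
  have hfL : ∀ y, f y = L (gradient H y) := by
    intro y; rw [hf, hLapp]
  -- derivative of σ
  set D : ℝ → EuclideanSpace ℝ (Fin m) := fun t => ∑ j : Fin s, (P (j : ℕ)).eval t • γ (j : ℕ) with hDdef
  set g : ℝ → EuclideanSpace ℝ (Fin m) := fun t => σ (t * h) with hgdef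
  have hg : ∀ t ∈ Set.Icc (0:ℝ) 1, HasDerivAt g (h • D t) t := by
    intro t ht
    exact (hσ t ht).scomp t (hasDerivAt_mul_const h)
  -- continuity facts
  have hHd : Differentiable ℝ H := hH.differentiable one_ne_zero
  have hgrad_cont : Continuous (fun x : EuclideanSpace ℝ (Fin m) => gradient H x) := by
    have hfd : Continuous (fun x : EuclideanSpace ℝ (Fin m) => fderiv ℝ H x) :=
      hH.continuous_fderiv one_ne_zero
    have : (fun x : EuclideanSpace ℝ (Fin m) => gradient H x)
        = (fun x => (InnerProductSpace.toDual ℝ (EuclideanSpace ℝ (Fin m))).symm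
            (fderiv ℝ H x)) := rfl
    rw [this]
    exact (InnerProductSpace.toDual ℝ (EuclideanSpace ℝ (Fin m))).symm.continuous.comp hfd
  have hgcont : ContinuousOn g (Set.Icc 0 1) := by
    intro t ht
    exact ((hg t ht).continuousAt).continuousWithinAt
  have hDcont : Continuous D :=
    continuous_finset_sum _ fun j _ => ((P (j : ℕ)).continuous).smul continuous_const
  have huIcc : Set.uIcc (0:ℝ) 1 = Set.Icc 0 1 := Set.uIcc_of_le zero_le_one
  -- integrand pieces: gradient along trajectory
  have hgradg : ContinuousOn (fun t => gradient H (g t)) (Set.Icc (0:ℝ) 1) :=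
    hgrad_cont.comp_continuousOn hgcont
  have hPgrad : ∀ j : ℕ, IntervalIntegrable
      (fun t => (P j).eval t • gradient H (g t)) MeasureTheory.volume 0 1 := by
    intro j
    apply ContinuousOn.intervalIntegrable
    rw [huIcc]
    exact ((P j).continuous.continuousOn).smul hgradg
  -- the "gradient moments"
  set G : ℕ → EuclideanSpace ℝ (Fin m) := fun j => ∫ t in (0:ℝ)..1, (P j).eval t • gradient H (g t) with hGdef
  -- γ j = L (G j)
  have hγL : ∀ j, γ j = L (G j) := by
    intro j
    rw [hγ j]
    have : (fun τ => (P j).eval τ • f (σ (τ * h)))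
        = fun τ => L ((P j).eval τ • gradient H (g τ)) := by
      funext τ
      rw [hfL]
      exact (L.map_smul ((P j).eval τ) (gradient H (g τ))).symm
    rw [this, L.intervalIntegral_comp_comm (hPgrad j)]
  -- FTC
  have hderiv : ∀ t ∈ Set.uIcc (0:ℝ) 1,
      HasDerivAt (fun t => H (g t)) (⟪gradient H (g t), h • D t⟫) t := by
    intro t ht
    rw [huIcc] at ht
    have h1 : HasDerivAt (fun t => H (g t)) (fderiv ℝ H (g t) (h • D t)) t :=
      (hHd (g t)).hasFDerivAt.comp_hasDerivAt t (hg t ht)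
    rwa [grad_inner]
  have hint : IntervalIntegrable (fun t => ⟪gradient H (g t), h • D t⟫)
      MeasureTheory.volume 0 1 := by
    apply ContinuousOn.intervalIntegrable
    rw [huIcc]
    exact hgradg.inner ((hDcont.const_smul h).continuousOn)
  have hftc : (∫ t in (0:ℝ)..1, ⟪gradient H (g t), h • D t⟫) = H (g 1) - H (g 0) :=
    intervalIntegral.integral_eq_sub_of_hasDerivAt hderiv hint
  -- compute the integral
  have hexpand : ∀ t : ℝ, ⟪gradient H (g t), h • D t⟫
      = ∑ j : Fin s, h * ((P (j : ℕ)).eval t * ⟪gradient H (g t), γ (j : ℕ)⟫) := by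
    intro t
    rw [hDdef, real_inner_smul_right, inner_sum, Finset.mul_sum]
    exact Finset.sum_congr rfl fun j _ => by rw [real_inner_smul_right]
  have hmoment : ∀ j : ℕ, (∫ t in (0:ℝ)..1, (P j).eval t * ⟪gradient H (g t), γ j⟫)
      = ⟪G j, γ j⟫ := by
    intro j
    have h1 := ((innerSL ℝ (E := EuclideanSpace ℝ (Fin m))).flip
        (γ j)).intervalIntegral_comp_comm (hPgrad j)
    simp only [ContinuousLinearMap.flip_apply, innerSL_apply_apply] at h1
    have heq : (fun t => (P j).eval t * ⟪gradient H (g t), γ j⟫)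
        = fun t => ⟪(P j).eval t • gradient H (g t), γ j⟫ := by
      funext t; rw [real_inner_smul_left]
    calc (∫ t in (0:ℝ)..1, (P j).eval t * ⟪gradient H (g t), γ j⟫)
        = ∫ t in (0:ℝ)..1, ⟪(P j).eval t • gradient H (g t), γ j⟫ := by rw [heq]
      _ = ⟪G j, γ j⟫ := h1
  have hintj : ∀ j : ℕ, IntervalIntegrable
      (fun t => (P j).eval t * ⟪gradient H (g t), γ j⟫) MeasureTheory.volume 0 1 := by
    intro j
    apply ContinuousOn.intervalIntegrable
    rw [huIcc]
    exact ((P j).continuous.continuousOn).mul (hgradg.inner continuousOn_const)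
  have hzero : (∫ t in (0:ℝ)..1, ⟪gradient H (g t), h • D t⟫) = 0 := by
    simp only [hexpand]
    rw [intervalIntegral.integral_finset_sum]
    · apply Finset.sum_eq_zero
      intro j _
      rw [intervalIntegral.integral_const_mul, hmoment, hγL, hLapp, inner_J_self J hJ,
        mul_zero]
    · intro j _
      exact (hintj (j : ℕ)).const_mul h
  rw [hzero] at hftc
  have hg1 : g 1 = σ h := by rw [hgdef]; simp
  have hg0 : g 0 = σ 0 := by rw [hgdef]; simp
  rw [hg1, hg0] at hftc
  linarith
end

section
/- With the notation of the k-node Gauss–Legendre quadrature on [0,1] (k ≥ s), define 𝒫_s, Ω as before and ℐ_s ∈ ℝ^{k×s} with entries (ℐ_s)_{ij} = ∫₀^{c_i} P_{j−1}(x) dx. Then 𝒫_sᵀ Ω ℐ_s = X_s, where X_s is the s×s matrix with entries (X_s)_{ij} = ∫₀¹ P_{i−1}(ξ)(∫₀^ξ P_{j−1}(x) dx) dξ. -/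
open Polynomial intervalIntegral Matrix

noncomputable def antider (p : Polynomial ℝ) : Polynomial ℝ :=
  ∑ n ∈ Finset.range (p.natDegree + 1), C (p.coeff n / (n + 1)) * X ^ (n + 1)

lemma antider_deriv (p : Polynomial ℝ) : derivative (antider p) = p := by
  unfold antider
  rw [map_sum]
  conv_rhs => rw [p.as_sum_range' (p.natDegree + 1) (Nat.lt_succ_self _)]
  refine Finset.sum_congr rfl fun n _ => ?_
  have hne : ((n : ℝ) + 1) ≠ 0 := by positivity
  rw [derivative_C_mul, derivative_X_pow]
  rw [← mul_assoc, ← C_mul]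
  push_cast
  rw [div_mul_cancel₀ _ hne, C_mul_X_pow_eq_monomial]

lemma antider_eval_zero (p : Polynomial ℝ) : (antider p).eval 0 = 0 := by
  unfold antider
  simp [Polynomial.eval_finset_sum]

lemma integral_eq_antider (p : Polynomial ℝ) (t : ℝ) :
    ∫ x in (0:ℝ)..t, p.eval x = (antider p).eval t := by
  rw [show (antider p).eval t = (antider p).eval t - (antider p).eval 0 by
    rw [antider_eval_zero]; ring]
  have hd : ∀ x ∈ Set.uIcc (0:ℝ) t, HasDerivAt (fun y => (antider p).eval y) (p.eval x) x := by
    intro x _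
    have := (antider p).hasDerivAt x
    rwa [antider_deriv] at this
  exact intervalIntegral.integral_eq_sub_of_hasDerivAt hd ((p.continuous).intervalIntegrable _ _)

lemma antider_natDegree_le (p : Polynomial ℝ) : (antider p).natDegree ≤ p.natDegree + 1 := by
  unfold antider
  refine (Polynomial.natDegree_sum_le _ _).trans ?_
  simp only [Finset.fold_max_le]
  constructor
  · omega
  · intro n hn
    refine (Polynomial.natDegree_C_mul_le _ _).trans ?_
    simp only [natDegree_X_pow]
    exact Nat.succ_le_succ (Nat.lt_succ_iff.mp (Finset.mem_range.mp hn))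

/-- For the `k`-node Gauss–Legendre quadrature on `[0,1]` (exact for degree ≤ 2k−1,
`k ≥ s`), one has `𝒫_sᵀ Ω ℐ_s = X_s`, where `(ℐ_s)_{ij} = ∫₀^{cᵢ} P_{j−1}` and
`(X_s)_{ij} = ∫₀¹ P_{i−1}(ξ)(∫₀^ξ P_{j−1}) dξ`. -/
theorem gauss_discrete_X
    (s k : ℕ) (hks : s ≤ k)
    (P : ℕ → Polynomial ℝ)
    (hdeg : ∀ j, (P j).natDegree = j)
    (hlead : ∀ j, 0 < (P j).leadingCoeff)
    (horth : ∀ i j, ∫ x in (0:ℝ)..1, (P i).eval x * (P j).eval x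
              = if i = j then 1 else 0)
    (b c : Fin k → ℝ)
    (hb : ∀ i, 0 < b i) (hc : ∀ i, c i ∈ Set.Ioo (0:ℝ) 1)
    (hexact : ∀ p : Polynomial ℝ, p.degree < 2 * k →
      ∑ i : Fin k, b i * p.eval (c i) = ∫ x in (0:ℝ)..1, p.eval x) :
    (Matrix.of fun (i : Fin k) (j : Fin s) => (P (j : ℕ)).eval (c i))ᵀ
      * Matrix.diagonal b
      * (Matrix.of fun (i : Fin k) (j : Fin s) =>
          ∫ x in (0:ℝ)..(c i), (P (j : ℕ)).eval x)
    = Matrix.of (fun (i : Fin s) (j : Fin s) =>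
        ∫ ξ in (0:ℝ)..1,
          (P (i : ℕ)).eval ξ * (∫ x in (0:ℝ)..ξ, (P (j : ℕ)).eval x)) := by
  ext i j
  have hs : 0 < s := Nat.pos_of_ne_zero (by rintro rfl; exact absurd i.2 (by omega))
  set q : Polynomial ℝ := P (i : ℕ) * antider (P (j : ℕ)) with hq
  have hqdeg : q.degree < 2 * k := by
    refine lt_of_le_of_lt (Polynomial.degree_le_natDegree) ?_
    have h1 : q.natDegree ≤ (i : ℕ) + ((j : ℕ) + 1) := by
      refine (Polynomial.natDegree_mul_le).trans ?_
      exact add_le_add (le_of_eq (hdeg _)) ((antider_natDegree_le _).trans (by rw [hdeg]))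
    have h2 : q.natDegree < 2 * k := by
      have := i.2; have := j.2; omega
    exact_mod_cast h2
  have key := hexact q hqdeg
  simp only [Matrix.mul_apply, Matrix.transpose_apply, Matrix.of_apply,
    Matrix.diagonal_apply, mul_ite, mul_zero, Finset.sum_ite_eq', Finset.mem_univ, if_true]
  calc (∑ l : Fin k, ((P (i:ℕ)).eval (c l) * b l) *
        (∫ x in (0:ℝ)..(c l), (P (j:ℕ)).eval x))
      = ∑ l : Fin k, b l * q.eval (c l) := by
        refine Finset.sum_congr rfl fun l _ => ?_
        rw [integral_eq_antider, hq, eval_mul]; ring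
    _ = ∫ x in (0:ℝ)..1, q.eval x := key
    _ = _ := by
        refine intervalIntegral.integral_congr fun x _ => ?_
        rw [hq, eval_mul, integral_eq_antider]
end

section
/- With the k-node Gauss–Legendre quadrature (exact for degree ≤ 2k−1, k ≥ s) and matrices ℐ_s, 𝒫_s, Ω, X_s as defined, the RKN Butcher matrix Ā := ℐ_s X_s 𝒫_sᵀ Ω has entries Ā_{ij} = b_j ā_s(c_i, c_j), where ā_s(c,τ) = ∫₀¹ a_s(c,ξ) a_s(ξ,τ) dξ and a_s(c,τ) = Σ_{l=0}^{s−1}(∫₀^c P_l) P_l(τ). -/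
open Polynomial intervalIntegral Matrix

/-- The RKN Butcher matrix `Ā = ℐ_s X_s 𝒫_sᵀ Ω` has entries
`Ā_{ij} = b_j ā_s(c_i, c_j)`, where `ā_s(c,τ) = ∫₀¹ a_s(c,ξ) a_s(ξ,τ) dξ`. -/
theorem hbvm_rkn_butcher_entries
    (s k : ℕ) (hks : s ≤ k)
    (P : ℕ → Polynomial ℝ)
    (hdeg : ∀ j, (P j).natDegree = j)
    (hlead : ∀ j, 0 < (P j).leadingCoeff)
    (horth : ∀ i j, ∫ x in (0:ℝ)..1, (P i).eval x * (P j).eval x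
              = if i = j then 1 else 0)
    (b c : Fin k → ℝ)
    (hb : ∀ i, 0 < b i) (hc : ∀ i, c i ∈ Set.Ioo (0:ℝ) 1)
    (hexact : ∀ p : Polynomial ℝ, p.degree < 2 * k →
      ∑ i : Fin k, b i * p.eval (c i) = ∫ x in (0:ℝ)..1, p.eval x)
    (a : ℝ → ℝ → ℝ)
    (ha : ∀ x τ, a x τ =
      ∑ l : Fin s, (∫ u in (0:ℝ)..x, (P (l : ℕ)).eval u) * (P (l : ℕ)).eval τ)
    (abar : ℝ → ℝ → ℝ)
    (habar : ∀ x τ, abar x τ = ∫ ξ in (0:ℝ)..1, a x ξ * a ξ τ)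
    (X : Matrix (Fin s) (Fin s) ℝ)
    (hX : ∀ i j : Fin s, X i j =
      ∫ ξ in (0:ℝ)..1, (P (i : ℕ)).eval ξ * (∫ x in (0:ℝ)..ξ, (P (j : ℕ)).eval x)) :
    ∀ i j : Fin k,
      ((Matrix.of fun (i : Fin k) (l : Fin s) =>
          ∫ x in (0:ℝ)..(c i), (P (l : ℕ)).eval x)
        * X
        * (Matrix.of fun (i : Fin k) (l : Fin s) => (P (l : ℕ)).eval (c i))ᵀ
        * Matrix.diagonal b) i j
      = b j * abar (c i) (c j) := by
  intro i j
  -- continuity facts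
  have hcontA : ∀ m : ℕ, Continuous fun ξ : ℝ => ∫ u in (0:ℝ)..ξ, (P m).eval u := by
    intro m
    exact intervalIntegral.continuous_primitive
      (fun a b => ((P m).continuous_aeval.intervalIntegrable a b)) 0
  have habar' : abar (c i) (c j)
      = ∑ l : Fin s, ∑ m : Fin s,
          (∫ u in (0:ℝ)..(c i), (P (l:ℕ)).eval u) * X l m * (P (m:ℕ)).eval (c j) := by
    rw [habar]
    have hint : ∀ ξ : ℝ, a (c i) ξ * a ξ (c j)
        = ∑ l : Fin s, ∑ m : Fin s,
            ((∫ u in (0:ℝ)..(c i), (P (l:ℕ)).eval u) * (P (m:ℕ)).eval (c j))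
              * ((P (l:ℕ)).eval ξ * (∫ u in (0:ℝ)..ξ, (P (m:ℕ)).eval u)) := by
      intro ξ
      rw [ha, ha, Finset.sum_mul_sum]
      refine Finset.sum_congr rfl fun l _ => Finset.sum_congr rfl fun m _ => ?_
      ring
    simp only [hint]
    rw [intervalIntegral.integral_finset_sum]
    · refine Finset.sum_congr rfl fun l _ => ?_
      rw [intervalIntegral.integral_finset_sum]
      · refine Finset.sum_congr rfl fun m _ => ?_
        rw [intervalIntegral.integral_const_mul, ← hX l m]
        ring
      · intro m _
        exact (continuous_const.mul (((P (l:ℕ)).continuous_aeval).mul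
          (hcontA (m:ℕ)))).intervalIntegrable 0 1
    · intro l _
      refine (Continuous.intervalIntegrable ?_ 0 1)
      exact continuous_finset_sum _ fun m _ =>
        continuous_const.mul (((P (l:ℕ)).continuous_aeval).mul (hcontA (m:ℕ)))
  rw [Matrix.mul_diagonal]
  simp only [Matrix.mul_apply, Matrix.transpose_apply, Matrix.of_apply, habar']
  simp only [Finset.sum_mul, Finset.mul_sum]
  rw [Finset.sum_comm]
  exact Finset.sum_congr rfl fun l _ => Finset.sum_congr rfl fun m _ => by ring
end
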